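/- Let A be a non-degenerate algebra and Δ: A → M(A⊗A) a linear map such that both canonical maps T₁(a⊗b) = Δ(a)(1⊗b) and T₂(c⊗a) = (c⊗1)Δ(a) have range in A⊗A. If T₁ (or T₂) is surjective onto A⊗A, then A is idempotent. -/

import Mathlib

open scoped TensorProduct

/-- The product of a non-unital algebra is non-degenerate. -/
def NonDeg (A : Type*) [Mul A] [Zero A] : Prop :=
  (∀ a : A, (∀ b : A, a * b = 0) → a = 0) ∧ (∀ b : A, (∀ a : A, a * b = 0) → b = 0)

/-- A multiplier of a non-unital algebra: a pair of linear maps `(l, r)` with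
`b * l a = r b * a` for all `a b`. -/
structure Multiplier (A : Type*) [NonUnitalNonAssocSemiring A] [Module ℂ A] where
  l : A →ₗ[ℂ] A
  r : A →ₗ[ℂ] A
  compat : ∀ a b : A, b * l a = r b * a

namespace Multiplier

variable {A : Type*}

section Basic
variable [NonUnitalNonAssocSemiring A] [Module ℂ A]

instance : Zero (Multiplier A) :=
  ⟨⟨0, 0, fun a b => by simp⟩⟩

instance : One (Multiplier A) :=
  ⟨⟨LinearMap.id, LinearMap.id, fun _ _ => rfl⟩⟩

instance : Add (Multiplier A) :=
  ⟨fun x y => ⟨x.l + y.l, x.r + y.r, fun a b => by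
    simp only [LinearMap.add_apply, mul_add, add_mul, x.compat, y.compat]⟩⟩

end Basic

section Assoc
variable [NonUnitalSemiring A] [Module ℂ A]

instance : Mul (Multiplier A) :=
  ⟨fun x y => ⟨x.l ∘ₗ y.l, y.r ∘ₗ x.r, fun a b => by
    simp only [LinearMap.comp_apply]
    rw [x.compat, y.compat]⟩⟩

variable [SMulCommClass ℂ A A] [IsScalarTower ℂ A A]

instance : SMul ℂ (Multiplier A) :=
  ⟨fun s x => ⟨s • x.l, s • x.r, fun a b => by
    simp only [LinearMap.smul_apply]
    rw [mul_smul_comm, smul_mul_assoc, x.compat]⟩⟩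

/-- The canonical embedding of `A` into its multiplier algebra. -/
def emb (c : A) : Multiplier A :=
  ⟨{ toFun := fun a => c * a
     map_add' := mul_add c
     map_smul' := fun s a => mul_smul_comm s c a },
   { toFun := fun b => b * c
     map_add' := fun a b => add_mul a b c
     map_smul' := fun s a => smul_mul_assoc s a c },
   fun a b => (mul_assoc b c a).symm⟩

end Assoc

end Multiplier


section AuxStatement9

open TensorProduct LinearMap

/-- Auxiliary equivalence `A ⊗ M ≃ (ι →₀ A)` given by a basis of `M`. -/
noncomputable def aux9E {A : Type*} [AddCommGroup A] [Module ℂ A]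
    (M : Type*) [AddCommGroup M] [Module ℂ M] :
    A ⊗[ℂ] M ≃ₗ[ℂ] (Module.Basis.ofVectorSpaceIndex ℂ M →₀ A) :=
  letI := Classical.decEq (Module.Basis.ofVectorSpaceIndex ℂ M)
  (TensorProduct.congr (LinearEquiv.refl ℂ A) (Module.Basis.ofVectorSpace ℂ M).repr).trans
    (TensorProduct.finsuppScalarRight ℂ ℂ A (Module.Basis.ofVectorSpaceIndex ℂ M))

lemma aux9E_tmul {A : Type*} [AddCommGroup A] [Module ℂ A]
    {M : Type*} [AddCommGroup M] [Module ℂ M] (a : A) (m : M)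
    (j : Module.Basis.ofVectorSpaceIndex ℂ M) :
    aux9E M (a ⊗ₜ[ℂ] m) j = ((Module.Basis.ofVectorSpace ℂ M).repr m) j • a := by
  simp [aux9E]

/-- Auxiliary equivalence `M ⊗ A ≃ (ι →₀ A)` given by a basis of `M`. -/
noncomputable def aux9E' {A : Type*} [AddCommGroup A] [Module ℂ A]
    (M : Type*) [AddCommGroup M] [Module ℂ M] :
    M ⊗[ℂ] A ≃ₗ[ℂ] (Module.Basis.ofVectorSpaceIndex ℂ M →₀ A) :=
  letI := Classical.decEq (Module.Basis.ofVectorSpaceIndex ℂ M)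
  (TensorProduct.congr (Module.Basis.ofVectorSpace ℂ M).repr (LinearEquiv.refl ℂ A)).trans
    (TensorProduct.finsuppScalarLeft ℂ A (Module.Basis.ofVectorSpaceIndex ℂ M))

lemma aux9E'_tmul {A : Type*} [AddCommGroup A] [Module ℂ A]
    {M : Type*} [AddCommGroup M] [Module ℂ M] (a : A) (m : M)
    (j : Module.Basis.ofVectorSpaceIndex ℂ M) :
    aux9E' M (m ⊗ₜ[ℂ] a) j = ((Module.Basis.ofVectorSpace ℂ M).repr m) j • a := by
  simp [aux9E']

variable {A : Type*} [NonUnitalRing A] [Module ℂ A] [SMulCommClass ℂ A A] [IsScalarTower ℂ A A]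

/-- If a simple tensor with a nonzero left factor vanishes, the right factor is zero. -/
lemma aux9_tmul_right_eq_zero {B Q : Type*} [AddCommGroup B] [Module ℂ B]
    [AddCommGroup Q] [Module ℂ Q] {x : B} (hx : x ≠ 0) {q : Q}
    (h : x ⊗ₜ[ℂ] q = (0 : B ⊗[ℂ] Q)) : q = 0 := by
  obtain ⟨φ, hφ⟩ : ∃ φ : Module.Dual ℂ B, φ x ≠ 0 := by
    by_contra hφ
    push_neg at hφ
    exact hx ((Module.forall_dual_apply_eq_zero_iff ℂ x).mp hφ)
  have h2 := congrArg (fun z => TensorProduct.lid ℂ Q (TensorProduct.map φ LinearMap.id z)) h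
  simp only [TensorProduct.map_tmul, LinearMap.id_coe, id_eq, TensorProduct.lid_tmul,
    map_zero] at h2
  exact (smul_eq_zero.mp h2).resolve_left hφ

/-- If a simple tensor with a nonzero right factor vanishes, the left factor is zero. -/
lemma aux9_tmul_left_eq_zero {B Q : Type*} [AddCommGroup B] [Module ℂ B]
    [AddCommGroup Q] [Module ℂ Q] {x : B} (hx : x ≠ 0) {q : Q}
    (h : q ⊗ₜ[ℂ] x = (0 : Q ⊗[ℂ] B)) : q = 0 := by
  obtain ⟨φ, hφ⟩ : ∃ φ : Module.Dual ℂ B, φ x ≠ 0 := by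
    by_contra hφ
    push_neg at hφ
    exact hx ((Module.forall_dual_apply_eq_zero_iff ℂ x).mp hφ)
  have h2 := congrArg (fun z => TensorProduct.rid ℂ Q (TensorProduct.map LinearMap.id φ z)) h
  simp only [TensorProduct.map_tmul, LinearMap.id_coe, id_eq, TensorProduct.rid_tmul,
    map_zero] at h2
  exact (smul_eq_zero.mp h2).resolve_left hφ

lemma aux9_left (hA2 : ∀ b : A, (∀ a : A, a * b = 0) → b = 0)
    {M : Type*} [AddCommGroup M] [Module ℂ M]
    (x : A ⊗[ℂ] M)
    (h : ∀ c : A, TensorProduct.map (mulLeft ℂ c) LinearMap.id x = 0) : x = 0 := by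
  classical
  have hnat : ∀ (c : A) (y : A ⊗[ℂ] M) (j),
      aux9E M (TensorProduct.map (mulLeft ℂ c) LinearMap.id y) j = c * (aux9E M y j) := by
    intro c y j
    induction y using TensorProduct.induction_on with
    | zero => simp
    | tmul a m =>
      simp only [TensorProduct.map_tmul, mulLeft_apply, LinearMap.id_coe, id_eq, aux9E_tmul]
      rw [mul_smul_comm]
    | add u v hu hv => simp only [map_add, Finsupp.add_apply, hu, hv, mul_add]
  have hg : ∀ j, aux9E M x j = 0 := by
    intro j
    refine hA2 _ (fun c => ?_)
    have h2 := hnat c x j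
    rw [h c] at h2
    simpa using h2.symm
  exact (LinearEquiv.map_eq_zero_iff _).mp (Finsupp.ext hg)

lemma aux9_right (hA2 : ∀ b : A, (∀ a : A, a * b = 0) → b = 0)
    {M : Type*} [AddCommGroup M] [Module ℂ M]
    (x : M ⊗[ℂ] A)
    (h : ∀ c : A, TensorProduct.map LinearMap.id (mulLeft ℂ c) x = 0) : x = 0 := by
  classical
  have hnat : ∀ (c : A) (y : M ⊗[ℂ] A) (j),
      aux9E' M (TensorProduct.map LinearMap.id (mulLeft ℂ c) y) j = c * (aux9E' M y j) := by
    intro c y j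
    induction y using TensorProduct.induction_on with
    | zero => simp
    | tmul m a =>
      simp only [TensorProduct.map_tmul, mulLeft_apply, LinearMap.id_coe, id_eq, aux9E'_tmul]
      rw [mul_smul_comm]
    | add u v hu hv => simp only [map_add, Finsupp.add_apply, hu, hv, mul_add]
  have hg : ∀ j, aux9E' M x j = 0 := by
    intro j
    refine hA2 _ (fun c => ?_)
    have h2 := hnat c x j
    rw [h c] at h2
    simpa using h2.symm
  exact (LinearEquiv.map_eq_zero_iff _).mp (Finsupp.ext hg)

/-- Left non-degeneracy of `A ⊗ A`. -/
lemma aux9_nd2 (hA2 : ∀ b : A, (∀ a : A, a * b = 0) → b = 0)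
    (w : A ⊗[ℂ] A) (h : ∀ c d : A, (c ⊗ₜ[ℂ] d) * w = 0) : w = 0 := by
  have hmul : ∀ (c d : A) (w : A ⊗[ℂ] A),
      (c ⊗ₜ[ℂ] d) * w
        = TensorProduct.map (mulLeft ℂ c) LinearMap.id
            (TensorProduct.map LinearMap.id (mulLeft ℂ d) w) := by
    intro c d w
    induction w using TensorProduct.induction_on with
    | zero => simp [mul_zero]
    | tmul x y => simp [Algebra.TensorProduct.tmul_mul_tmul]
    | add u v hu hv => simp [mul_add, map_add, hu, hv]
  refine aux9_right hA2 _ (fun d => ?_)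
  refine aux9_left hA2 _ (fun c => ?_)
  rw [← hmul]
  exact h c d

lemma aux9_mulL (c : A) (u v : A ⊗[ℂ] A) :
    u * (TensorProduct.map (mulLeft ℂ c) LinearMap.id v)
      = (TensorProduct.map (mulRight ℂ c) LinearMap.id u) * v := by
  induction u using TensorProduct.induction_on with
  | zero => simp [zero_mul]
  | add u1 u2 h1 h2 => simp [add_mul, map_add, h1, h2]
  | tmul p q =>
    induction v using TensorProduct.induction_on with
    | zero => simp [mul_zero]
    | add v1 v2 h1 h2 => simp [mul_add, map_add, h1, h2]
    | tmul x y =>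
      simp [Algebra.TensorProduct.tmul_mul_tmul, mul_assoc]

lemma aux9_mulR (b : A) (u v : A ⊗[ℂ] A) :
    u * (TensorProduct.map LinearMap.id (mulRight ℂ b) v)
      = TensorProduct.map LinearMap.id (mulRight ℂ b) (u * v) := by
  induction u using TensorProduct.induction_on with
  | zero => simp [zero_mul]
  | add u1 u2 h1 h2 => simp [add_mul, map_add, h1, h2]
  | tmul p q =>
    induction v using TensorProduct.induction_on with
    | zero => simp [mul_zero]
    | add v1 v2 h1 h2 => simp [mul_add, map_add, h1, h2]
    | tmul x y =>
      simp [Algebra.TensorProduct.tmul_mul_tmul, mul_assoc]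

end AuxStatement9

/-- If `Δ : A → M(A⊗A)` is a linear map whose canonical maps `T₁` and `T₂` have range in
`A ⊗ A`, and `T₁` or `T₂` is surjective onto `A ⊗ A`, then `A` is idempotent. -/
theorem statement9 {A : Type*}
    [NonUnitalRing A] [Module ℂ A] [SMulCommClass ℂ A A] [IsScalarTower ℂ A A]
    (hA : NonDeg A)
    (Δ : A → Multiplier (A ⊗[ℂ] A))
    (hΔadd : ∀ a a' : A, Δ (a + a') = Δ a + Δ a')
    (hΔsmul : ∀ (s : ℂ) (a : A), Δ (s • a) = s • Δ a)
    (T1 T2 : (A ⊗[ℂ] A) →ₗ[ℂ] (A ⊗[ℂ] A))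
    -- T₁(a ⊗ b) is the element Δ(a)(1 ⊗ b) of A ⊗ A :
    (hT1 : ∀ a b : A,
      (∀ u : A ⊗[ℂ] A, T1 (a ⊗ₜ[ℂ] b) * u =
        (Δ a).l ((TensorProduct.map LinearMap.id (LinearMap.mulLeft ℂ b)) u)) ∧
      (∀ u : A ⊗[ℂ] A, u * T1 (a ⊗ₜ[ℂ] b) =
        (TensorProduct.map LinearMap.id (LinearMap.mulRight ℂ b)) ((Δ a).r u)))
    -- T₂(c ⊗ a) is the element (c ⊗ 1)Δ(a) of A ⊗ A :
    (hT2 : ∀ c a : A,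
      (∀ u : A ⊗[ℂ] A, T2 (c ⊗ₜ[ℂ] a) * u =
        (TensorProduct.map (LinearMap.mulLeft ℂ c) LinearMap.id) ((Δ a).l u)) ∧
      (∀ u : A ⊗[ℂ] A, u * T2 (c ⊗ₜ[ℂ] a) =
        (Δ a).r ((TensorProduct.map (LinearMap.mulRight ℂ c) LinearMap.id) u)))
    (hsurj : Function.Surjective T1 ∨ Function.Surjective T2) :
    Submodule.span ℂ {x : A | ∃ a b : A, x = a * b} = ⊤ := by
    classical
  rcases subsingleton_or_nontrivial A with hS | hN
  · rw [eq_top_iff]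
    intro t _
    exact (Subsingleton.elim (0 : A) t) ▸ Submodule.zero_mem _
  set V : Submodule ℂ A := Submodule.span ℂ {x : A | ∃ a b : A, x = a * b} with hV
  rw [eq_top_iff]
  intro t _
  show t ∈ V
  have key : ∀ a b c : A,
      TensorProduct.map (LinearMap.mulLeft ℂ c) LinearMap.id (T1 (a ⊗ₜ[ℂ] b))
        = TensorProduct.map LinearMap.id (LinearMap.mulRight ℂ b) (T2 (c ⊗ₜ[ℂ] a)) := by
    intro a b c
    rw [← sub_eq_zero]
    refine aux9_nd2 hA.2 _ (fun c' d' => ?_)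
    rw [mul_sub, aux9_mulL, aux9_mulR, sub_eq_zero]
    rw [(hT1 a b).2 (TensorProduct.map (LinearMap.mulRight ℂ c) LinearMap.id (c' ⊗ₜ[ℂ] d')),
      (hT2 c a).2 (c' ⊗ₜ[ℂ] d')]
  suffices hq : Submodule.Quotient.mk (p := V) t = 0 by
    rwa [Submodule.Quotient.mk_eq_zero] at hq
  rcases hsurj with hs | hs
  · obtain ⟨x, hx⟩ := exists_ne (0 : A)
    obtain ⟨c, hc⟩ : ∃ c : A, c * x ≠ 0 := by
      by_contra hcon
      push_neg at hcon
      exact hx (hA.2 x hcon)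
    obtain ⟨u, hu⟩ := hs (x ⊗ₜ[ℂ] t)
    have inner : ∀ (b : A) (z : A ⊗[ℂ] A),
        TensorProduct.map LinearMap.id V.mkQ
          (TensorProduct.map LinearMap.id (LinearMap.mulRight ℂ b) z) = 0 := by
      intro b z
      induction z using TensorProduct.induction_on with
      | zero => simp
      | add z1 z2 h1 h2 => simp [map_add, h1, h2]
      | tmul p q =>
        simp only [TensorProduct.map_tmul, LinearMap.id_coe, id_eq,
          LinearMap.mulRight_apply, Submodule.mkQ_apply]
        have hz : Submodule.Quotient.mk (p := V) (q * b) = 0 := by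
          rw [Submodule.Quotient.mk_eq_zero]
          exact Submodule.subset_span ⟨q, b, rfl⟩
        rw [hz, TensorProduct.tmul_zero]
    have hzero : ∀ v : A ⊗[ℂ] A,
        TensorProduct.map LinearMap.id V.mkQ
          (TensorProduct.map (LinearMap.mulLeft ℂ c) LinearMap.id (T1 v)) = 0 := by
      intro v
      induction v using TensorProduct.induction_on with
      | zero => simp
      | add v1 v2 h1 h2 => simp [map_add, h1, h2]
      | tmul a b => rw [key a b c]; exact inner b _
    have h0 := hzero u
    rw [hu] at h0
    simp only [TensorProduct.map_tmul, LinearMap.mulLeft_apply, LinearMap.id_coe, id_eq,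
      Submodule.mkQ_apply] at h0
    exact aux9_tmul_right_eq_zero hc h0
  · obtain ⟨x, hx⟩ := exists_ne (0 : A)
    obtain ⟨d, hd⟩ : ∃ d : A, x * d ≠ 0 := by
      by_contra hcon
      push_neg at hcon
      exact hx (hA.1 x hcon)
    obtain ⟨u, hu⟩ := hs (t ⊗ₜ[ℂ] x)
    have inner : ∀ (c : A) (z : A ⊗[ℂ] A),
        TensorProduct.map V.mkQ LinearMap.id
          (TensorProduct.map (LinearMap.mulLeft ℂ c) LinearMap.id z) = 0 := by
      intro c z
      induction z using TensorProduct.induction_on with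
      | zero => simp
      | add z1 z2 h1 h2 => simp [map_add, h1, h2]
      | tmul p q =>
        simp only [TensorProduct.map_tmul, LinearMap.id_coe, id_eq,
          LinearMap.mulLeft_apply, Submodule.mkQ_apply]
        have hz : Submodule.Quotient.mk (p := V) (c * p) = 0 := by
          rw [Submodule.Quotient.mk_eq_zero]
          exact Submodule.subset_span ⟨c, p, rfl⟩
        rw [hz, TensorProduct.zero_tmul]
    have hzero : ∀ v : A ⊗[ℂ] A,
        TensorProduct.map V.mkQ LinearMap.id
          (TensorProduct.map LinearMap.id (LinearMap.mulRight ℂ d) (T2 v)) = 0 := by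
      intro v
      induction v using TensorProduct.induction_on with
      | zero => simp
      | add v1 v2 h1 h2 => simp [map_add, h1, h2]
      | tmul c a => rw [← key a d c]; exact inner c _
    have h0 := hzero u
    rw [hu] at h0
    simp only [TensorProduct.map_tmul, LinearMap.mulRight_apply, LinearMap.id_coe, id_eq,
      Submodule.mkQ_apply] at h0
    exact aux9_tmul_left_eq_zero hd h0
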